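/- Let D ⊆ ℂ be a domain and let p : E → D be a holomorphic covering map from the unit disc onto D. Then for every holomorphic map f : E → D with f(0) = p(0) one has |f'(0)| ≤ |p'(0)|; consequently κ_D(p(0); p'(0)) = 1. -/

import Mathlib

open Set Metric Complex

noncomputable section

/-- The open unit disc `E` in `ℂ`. -/
def unitDisc : Set ℂ := Metric.ball (0 : ℂ) 1

/-- The Kobayashi–Royden pseudometric of a set `D` in a complex normed space:
`κ_D(z;X) = inf {|α| : ∃ holomorphic f : E → D, f(0) = z, α·f'(0) = X}`. -/
def kobayashi {V : Type*} [NormedAddCommGroup V] [NormedSpace ℂ V]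
    (D : Set V) (z X : V) : ℝ :=
  sInf {r : ℝ | ∃ (α : ℂ) (f : ℂ → V), ‖α‖ = r ∧
    DifferentiableOn ℂ f unitDisc ∧ MapsTo f unitDisc D ∧
    f 0 = z ∧ α • deriv f 0 = X}

/-- The Hahn pseudometric of a set `D` in a complex normed space:
`h_D(z;X) = inf {|α| : ∃ injective holomorphic f : E → D, f(0) = z, α·f'(0) = X}`. -/
def hahn {V : Type*} [NormedAddCommGroup V] [NormedSpace ℂ V]
    (D : Set V) (z X : V) : ℝ :=
  sInf {r : ℝ | ∃ (α : ℂ) (f : ℂ → V), ‖α‖ = r ∧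
    DifferentiableOn ℂ f unitDisc ∧ MapsTo f unitDisc D ∧ InjOn f unitDisc ∧
    f 0 = z ∧ α • deriv f 0 = X}

/-- `p` is a holomorphic covering map from the unit disc onto `D`. (Since the unit
disc is simply connected, such a covering is automatically a universal covering.) -/
def IsHoloCoveringOnto (p : ℂ → ℂ) (D : Set ℂ) : Prop :=
  DifferentiableOn ℂ p unitDisc ∧
  ∃ h : MapsTo p unitDisc D,
    IsCoveringMap (MapsTo.restrict p unitDisc D h) ∧ SurjOn p unitDisc D


open Filter Topology
open scoped Topology

lemma isOpen_unitDisc : IsOpen unitDisc := Metric.isOpen_ball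
lemma zero_mem_unitDisc : (0:ℂ) ∈ unitDisc := by simp [unitDisc]

variable {p : ℂ → ℂ} {D : Set ℂ} {hmaps : Set.MapsTo p unitDisc D}

/-- Uniqueness of lifts through the covering. -/
lemma lift_unique (hcov : IsCoveringMap (Set.MapsTo.restrict p unitDisc D hmaps))
    {s : Set ℂ} (hs : IsPreconnected s) {g₁ g₂ : ℂ → ℂ}
    (h₁ : ContinuousOn g₁ s) (h₂ : ContinuousOn g₂ s)
    (m₁ : Set.MapsTo g₁ s unitDisc) (m₂ : Set.MapsTo g₂ s unitDisc)
    (he : Set.EqOn (p ∘ g₁) (p ∘ g₂) s) {a : ℂ} (ha : a ∈ s) (hag : g₁ a = g₂ a) :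
    Set.EqOn g₁ g₂ s := by
  classical
  set G₁ : ℂ → ↥unitDisc := fun z =>
    if h : g₁ z ∈ unitDisc then ⟨g₁ z, h⟩ else ⟨0, zero_mem_unitDisc⟩ with hG₁
  set G₂ : ℂ → ↥unitDisc := fun z =>
    if h : g₂ z ∈ unitDisc then ⟨g₂ z, h⟩ else ⟨0, zero_mem_unitDisc⟩ with hG₂
  have hco₁ : ∀ z ∈ s, (G₁ z : ℂ) = g₁ z := fun z hz => by simp [hG₁, dif_pos (m₁ hz)]
  have hco₂ : ∀ z ∈ s, (G₂ z : ℂ) = g₂ z := fun z hz => by simp [hG₂, dif_pos (m₂ hz)]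
  have hcG₁ : ContinuousOn G₁ s := by
    rw [Topology.IsInducing.subtypeVal.continuousOn_iff]
    exact h₁.congr hco₁
  have hcG₂ : ContinuousOn G₂ s := by
    rw [Topology.IsInducing.subtypeVal.continuousOn_iff]
    exact h₂.congr hco₂
  have heG : Set.EqOn ((Set.MapsTo.restrict p unitDisc D hmaps) ∘ G₁)
      ((Set.MapsTo.restrict p unitDisc D hmaps) ∘ G₂) s := by
    intro z hz
    apply Subtype.ext
    show p ((G₁ z : ℂ)) = p ((G₂ z : ℂ))
    rw [hco₁ z hz, hco₂ z hz]
    exact he hz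
  have hagG : G₁ a = G₂ a := by
    apply Subtype.ext
    rw [hco₁ a ha, hco₂ a ha, hag]
  have := hcov.eqOn_of_comp_eqOn hs hcG₁ hcG₂ heG ha hagG
  intro z hz
  rw [← hco₁ z hz, ← hco₂ z hz, this hz]

/-- Existence of local sections of the covering through any point of the disc. -/
lemma exists_section (hD : IsOpen D)
    (hcov : IsCoveringMap (Set.MapsTo.restrict p unitDisc D hmaps))
    {e : ℂ} (he : e ∈ unitDisc) :
    ∃ U s, IsOpen U ∧ p e ∈ U ∧ U ⊆ D ∧ ContinuousOn s U ∧
      Set.MapsTo s U unitDisc ∧ (∀ u ∈ U, p (s u) = u) ∧ s (p e) = e := by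
  classical
  set P := Set.MapsTo.restrict p unitDisc D hmaps with hP
  set x : ↥D := ⟨p e, hmaps he⟩ with hx
  have hec := hcov x
  haveI : Nonempty ↑(P ⁻¹' {x}) := ⟨⟨⟨e, he⟩, rfl⟩⟩
  set T := hec.toTrivialization with hT
  have hbx : x ∈ T.baseSet := hec.mem_toTrivialization_baseSet
  set e' : ↥unitDisc := ⟨e, he⟩ with he'def
  have hPe' : P e' = x := rfl
  have he's : e' ∈ T.source := T.mem_source.mpr (by rw [hPe']; exact hbx)
  set c := (T e').2 with hc
  set U : Set ℂ := Subtype.val '' T.baseSet with hU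
  have hUopen : IsOpen U := hD.isOpenMap_subtype_val _ T.open_baseSet
  have hUsub : U ⊆ D := by rintro u ⟨y, _, rfl⟩; exact y.2
  have hpeU : p e ∈ U := ⟨x, hbx, rfl⟩
  set σ : ↥D → ↥unitDisc := fun y => T.toPartialHomeomorph.symm (y, c) with hσ
  set ι : ℂ → ↥D := fun u => if h : u ∈ D then ⟨u, h⟩ else x with hι
  set s : ℂ → ℂ := fun u => ((σ (ι u) : ↥unitDisc) : ℂ) with hs
  have hιb : ∀ u ∈ U, ι u ∈ T.baseSet ∧ ((ι u : ↥D) : ℂ) = u := by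
    rintro u ⟨y, hy, rfl⟩
    have hyD : (y : ℂ) ∈ D := y.2
    have : ι (y : ℂ) = y := by simp [hι, dif_pos hyD]
    rw [this]
    exact ⟨hy, rfl⟩
  have hsymm_eq : (T.toPartialHomeomorph.symm : ↥D × (P ⁻¹' {x}) → ↥unitDisc)
      = T.toPartialEquiv.symm := (T.toPartialHomeomorph.coe_toPartialEquiv_symm).symm
  have hPs : ∀ u ∈ U, P (σ (ι u)) = ι u := by
    intro u hu
    rw [hσ]
    show P (T.toPartialHomeomorph.symm (ι u, c)) = ι u
    rw [hsymm_eq]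
    exact T.proj_symm_apply' (hιb u hu).1
  refine ⟨U, s, hUopen, hpeU, hUsub, ?_, ?_, ?_, ?_⟩
  · -- continuity
    have hcσι : ContinuousOn (fun u => σ (ι u)) U := by
      have hcι : ContinuousOn ι U := by
        rw [Topology.IsInducing.subtypeVal.continuousOn_iff]
        apply ContinuousOn.congr (continuousOn_id) 
        intro u hu
        exact (hιb u hu).2
      have hcsymm : ContinuousOn (T.toPartialHomeomorph.symm) T.target :=
        T.toPartialHomeomorph.continuousOn_symm
      have hpair : ContinuousOn (fun u : ℂ => ((ι u, c) : ↥D × (P ⁻¹' {x}))) U :=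
        hcι.prodMk continuousOn_const
      apply hcsymm.comp hpair
      intro u hu
      rw [T.target_eq]
      exact Set.mk_mem_prod (hιb u hu).1 (Set.mem_univ _)
    exact continuous_subtype_val.comp_continuousOn hcσι
  · -- maps to unitDisc
    intro u _
    exact (σ (ι u)).2
  · -- section property
    intro u hu
    have h1 := hPs u hu
    have : p (s u) = ((P (σ (ι u)) : ↥D) : ℂ) := by
      rw [hs]
      exact (Set.MapsTo.val_restrict_apply hmaps _).symm
    rw [this, h1, (hιb u hu).2]
  · -- through e
    have hιpe : ι (p e) = x := by simp [hι, dif_pos (hmaps he), hx]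
    have hTe' : T e' = (x, c) := by
      rw [hc]
      exact (Prod.ext (T.coe_fst he's) rfl)
    have : σ x = e' := by
      rw [hσ]
      show T.toPartialHomeomorph.symm (x, c) = e'
      rw [hsymm_eq]
      exact T.symm_apply_mk_proj he's
    rw [hs]
    simp only [hιpe, this]
    rfl

/-- Local injectivity of `p` on the disc. -/
lemma exists_injOn (hcov : IsCoveringMap (Set.MapsTo.restrict p unitDisc D hmaps))
    {e : ℂ} (he : e ∈ unitDisc) :
    ∃ V, IsOpen V ∧ e ∈ V ∧ V ⊆ unitDisc ∧ Set.InjOn p V := by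
  set P := Set.MapsTo.restrict p unitDisc D hmaps with hP
  obtain ⟨PH, hmem, heq⟩ := hcov.isLocalHomeomorph ⟨e, he⟩
  set V : Set ℂ := Subtype.val '' PH.source with hV
  have hVopen : IsOpen V := isOpen_unitDisc.isOpenMap_subtype_val _ PH.open_source
  refine ⟨V, hVopen, ⟨⟨e, he⟩, hmem, rfl⟩, ?_, ?_⟩
  · rintro v ⟨y, _, rfl⟩; exact y.2
  · rintro a ⟨y, hy, rfl⟩ b ⟨y', hy', rfl⟩ hab
    have : P y = P y' := by
      apply Subtype.ext
      exact hab
    rw [heq] at this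
    exact congrArg Subtype.val (PH.injOn hy hy' this)

/-- Evenly covered neighborhoods with sections through arbitrary preimage points. -/
lemma exists_section' (hD : IsOpen D)
    (hcov : IsCoveringMap (Set.MapsTo.restrict p unitDisc D hmaps))
    {x : ℂ} (hx : x ∈ D) :
    ∃ U : Set ℂ, IsOpen U ∧ x ∈ U ∧ U ⊆ D ∧
      ∀ e ∈ unitDisc, p e ∈ U → ∃ s, ContinuousOn s U ∧
        Set.MapsTo s U unitDisc ∧ (∀ u ∈ U, p (s u) = u) ∧ s (p e) = e := by
  classical
  set P := Set.MapsTo.restrict p unitDisc D hmaps with hP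
  set x₀ : ↥D := ⟨x, hx⟩ with hx₀
  have hec := hcov x₀
  rcases isEmpty_or_nonempty ↑(P ⁻¹' {x₀}) with hemp | hne
  · obtain ⟨-, V, hxV, hVo, -, H, -⟩ := hec
    refine ⟨Subtype.val '' V, hD.isOpenMap_subtype_val _ hVo, ⟨x₀, hxV, rfl⟩,
      by rintro u ⟨y, _, rfl⟩; exact y.2, ?_⟩
    rintro e he ⟨y, hy, hye⟩
    have hPe : P ⟨e, he⟩ ∈ V := by
      have : P ⟨e, he⟩ = y := Subtype.ext hye.symm
      rw [this]; exact hy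
    exact (hemp.false (H ⟨⟨e, he⟩, hPe⟩).2).elim
  set T := hec.toTrivialization with hT
  have hbx : x₀ ∈ T.baseSet := hec.mem_toTrivialization_baseSet
  set U : Set ℂ := Subtype.val '' T.baseSet with hU
  have hUopen : IsOpen U := hD.isOpenMap_subtype_val _ T.open_baseSet
  have hUsub : U ⊆ D := by rintro u ⟨y, _, rfl⟩; exact y.2
  have hιb' : ∀ u ∈ U, ∀ (h : u ∈ D), (⟨u, h⟩ : ↥D) ∈ T.baseSet := by
    rintro u ⟨y, hy, rfl⟩ h
    have : (⟨(y:ℂ), h⟩ : ↥D) = y := Subtype.ext rfl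
    rwa [this]
  refine ⟨U, hUopen, ⟨x₀, hbx, rfl⟩, hUsub, ?_⟩
  intro e he hpeU
  set e' : ↥unitDisc := ⟨e, he⟩ with he'def
  have hPe' : P e' = ⟨p e, hmaps he⟩ := rfl
  have he's : e' ∈ T.source := by
    rw [T.mem_source, hPe']
    exact hιb' _ hpeU _
  set c := (T e').2 with hc
  set σ : ↥D → ↥unitDisc := fun y => T.toPartialHomeomorph.symm (y, c) with hσ
  set ι : ℂ → ↥D := fun u => if h : u ∈ D then ⟨u, h⟩ else x₀ with hι
  set s : ℂ → ℂ := fun u => ((σ (ι u) : ↥unitDisc) : ℂ) with hs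
  have hιb : ∀ u ∈ U, ι u ∈ T.baseSet ∧ ((ι u : ↥D) : ℂ) = u := by
    intro u hu
    have huD : u ∈ D := hUsub hu
    have : ι u = ⟨u, huD⟩ := by simp [hι, dif_pos huD]
    rw [this]
    exact ⟨hιb' u hu huD, rfl⟩
  have hsymm_eq : (T.toPartialHomeomorph.symm : ↥D × (P ⁻¹' {x₀}) → ↥unitDisc)
      = T.toPartialEquiv.symm := (T.toPartialHomeomorph.coe_toPartialEquiv_symm).symm
  have hPs : ∀ u ∈ U, P (σ (ι u)) = ι u := by
    intro u hu
    rw [hσ]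
    show P (T.toPartialHomeomorph.symm (ι u, c)) = ι u
    rw [hsymm_eq]
    exact T.proj_symm_apply' (hιb u hu).1
  refine ⟨s, ?_, ?_, ?_, ?_⟩
  · have hcσι : ContinuousOn (fun u => σ (ι u)) U := by
      have hcι : ContinuousOn ι U := by
        rw [Topology.IsInducing.subtypeVal.continuousOn_iff]
        apply ContinuousOn.congr (continuousOn_id)
        intro u hu
        exact (hιb u hu).2
      have hcsymm : ContinuousOn (T.toPartialHomeomorph.symm) T.target :=
        T.toPartialHomeomorph.continuousOn_symm
      have hpair : ContinuousOn (fun u : ℂ => ((ι u, c) : ↥D × (P ⁻¹' {x₀}))) U :=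
        hcι.prodMk continuousOn_const
      apply hcsymm.comp hpair
      intro u hu
      rw [T.target_eq]
      exact Set.mk_mem_prod (hιb u hu).1 (Set.mem_univ _)
    exact continuous_subtype_val.comp_continuousOn hcσι
  · intro u _
    exact (σ (ι u)).2
  · intro u hu
    have h1 := hPs u hu
    have : p (s u) = ((P (σ (ι u)) : ↥D) : ℂ) := by
      rw [hs]
      exact (Set.MapsTo.val_restrict_apply hmaps _).symm
    rw [this, h1, (hιb u hu).2]
  · have hιpe : ι (p e) = P e' := by
      apply Subtype.ext
      simp [hι, dif_pos (hmaps he), hPe']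
    have : σ (P e') = e' := by
      rw [hσ]
      show T.toPartialHomeomorph.symm (P e', c) = e'
      rw [hsymm_eq]
      exact T.symm_apply_mk_proj he's
    rw [hs]
    simp only [hιpe, this]
    rfl

/-- A lift on a subset. -/
def IsLiftOn (p f g : ℂ → ℂ) (s : Set ℂ) : Prop :=
  ContinuousOn g s ∧ Set.MapsTo g s unitDisc ∧ Set.EqOn (p ∘ g) f s ∧ g 0 = 0

lemma IsLiftOn.mono {p f g : ℂ → ℂ} {s t : Set ℂ} (h : IsLiftOn p f g s) (hts : t ⊆ s) :
    IsLiftOn p f g t :=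
  ⟨h.1.mono hts, h.2.1.mono_left hts, fun _ hz => h.2.2.1 (hts hz), h.2.2.2⟩

lemma midpoint_abs_lt {R : ℝ} (hR : 0 < R) {ζ ξ : ℂ}
    (hζ : ‖ζ‖ = R) (hξ : ‖ξ‖ = R) (hne : ζ ≠ ξ) :
    ‖(ζ + ξ)/2‖ < R := by
  have hle : ‖ζ + ξ‖ ≤ 2 * R := by
    calc ‖ζ + ξ‖ ≤ ‖ζ‖ + ‖ξ‖ := norm_add_le _ _
    _ = 2 * R := by rw [hζ, hξ]; ring
  have hneq : ‖ζ + ξ‖ ≠ 2 * R := by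
    intro h
    have hsr : SameRay ℝ ζ ξ := by
      rw [sameRay_iff_norm_add]
      rw [h, hζ, hξ]; ring
    exact hne (hsr.eq_of_norm_eq (by rw [hζ, hξ]))
  have hlt : ‖ζ + ξ‖ < 2 * R := lt_of_le_of_ne hle hneq
  have : ‖(ζ + ξ)/2‖ = ‖ζ + ξ‖/2 := by
    rw [norm_div]
    simp
  rw [this]
  linarith

lemma extend_lift (hD : IsOpen D)
    (hcov : IsCoveringMap (Set.MapsTo.restrict p unitDisc D hmaps))
    {f : ℂ → ℂ} (hfc : ContinuousOn f unitDisc) (hfm : Set.MapsTo f unitDisc D)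
    {R : ℝ} (hR0 : 0 < R) (hR1 : R < 1) {g : ℂ → ℂ}
    (hg : IsLiftOn p f g (ball 0 R)) :
    ∃ R', R < R' ∧ R' ≤ 1 ∧ ∃ g', IsLiftOn p f g' (ball 0 R') := by
  classical
  obtain ⟨hgc, hgm, hgp, hg0⟩ := hg
  have hsub : sphere (0:ℂ) R ⊆ unitDisc := fun z hz => by
    rw [mem_sphere_zero_iff_norm] at hz
    simpa [unitDisc, mem_ball_zero_iff, hz] using hR1
  -- sections indexed by points of D
  have hUex := fun (x : ↥D) => exists_section' hD hcov x.2
  choose U hUopen hxU hUsub hsec using hUex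
  -- Lebesgue number
  have hcover : sphere (0:ℂ) R ⊆ ⋃ x : ↥D, (unitDisc ∩ f ⁻¹' (U x)) := by
    intro ζ hζ
    have h1 : ζ ∈ unitDisc := hsub hζ
    exact Set.mem_iUnion.mpr ⟨⟨f ζ, hfm h1⟩, h1, hxU _⟩
  obtain ⟨δ₀, hδ₀, hleb⟩ := lebesgue_number_lemma_of_metric (isCompact_sphere (0:ℂ) R)
    (fun x => hfc.isOpen_inter_preimage isOpen_unitDisc (hUopen x)) hcover
  set δ : ℝ := min δ₀ R with hδdef
  have hδ0 : 0 < δ := lt_min hδ₀ hR0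
  have hδR : δ ≤ R := min_le_right _ _
  have hδδ₀ : δ ≤ δ₀ := min_le_left _ _
  -- patches
  have hpatch : ∀ ζ ∈ sphere (0:ℂ) R, ∃ h : ℂ → ℂ,
      ContinuousOn h (ball ζ δ) ∧ Set.MapsTo h (ball ζ δ) unitDisc ∧
      Set.EqOn (p ∘ h) f (ball ζ δ) ∧ Set.EqOn h g (ball ζ δ ∩ ball 0 R) := by
    intro ζ hζ
    have hζR : ‖ζ‖ = R := by rwa [mem_sphere_zero_iff_norm] at hζ
    obtain ⟨x, hx⟩ := hleb ζ hζ
    have hballsub : ball ζ δ ⊆ unitDisc ∩ f ⁻¹' (U x) :=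
      (ball_subset_ball hδδ₀).trans hx
    -- the point w
    set w : ℂ := ζ * (1 - ((δ/(2*R) : ℝ) : ℂ)) with hwdef
    have hwζ : ‖w - ζ‖ = δ/2 := by
      have : w - ζ = -ζ * ((δ/(2*R) : ℝ) : ℂ) := by rw [hwdef]; ring
      rw [this, norm_mul, norm_neg, hζR, Complex.norm_real, Real.norm_eq_abs,
        _root_.abs_of_pos (by positivity : (0:ℝ) < δ/(2*R))]
      field_simp
    have hwabs : ‖w‖ = R - δ/2 := by
      rw [hwdef, norm_mul]
      have h1 : ‖1 - ((δ/(2*R) : ℝ) : ℂ)‖ = 1 - δ/(2*R) := by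
        have : (1 : ℂ) - ((δ/(2*R) : ℝ) : ℂ) = (((1 - δ/(2*R) : ℝ)) : ℂ) := by push_cast; ring
        rw [this, Complex.norm_real, Real.norm_eq_abs, _root_.abs_of_nonneg]
        have : δ/(2*R) ≤ 1 := by
          rw [div_le_one (by positivity)]; linarith
        linarith
      rw [hζR, h1]
      field_simp
    have hwball : w ∈ ball ζ δ := by
      rw [mem_ball, Complex.dist_eq, hwζ]; linarith
    have hwR : w ∈ ball 0 R := by
      rw [mem_ball_zero_iff, hwabs]; linarith
    have hfwU : f w ∈ U x := (hballsub hwball).2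
    have hew : g w ∈ unitDisc := hgm hwR
    have hpgw : p (g w) = f w := hgp hwR
    obtain ⟨s, hsc, hsm, hsp, hse⟩ := hsec x (g w) hew (by rw [hpgw]; exact hfwU)
    refine ⟨s ∘ f, ?_, ?_, ?_, ?_⟩
    · exact hsc.comp (hfc.mono (fun z hz => (hballsub hz).1)) (fun z hz => (hballsub hz).2)
    · exact fun z hz => hsm (hballsub hz).2
    · intro z hz
      exact hsp _ (hballsub hz).2
    · -- agrees with g
      have hhc : ContinuousOn (s ∘ f) (ball ζ δ ∩ ball 0 R) :=
        (hsc.comp (hfc.mono (fun z hz => (hballsub hz).1))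
          (fun z hz => (hballsub hz).2)).mono Set.inter_subset_left
      have hgc' : ContinuousOn g (ball ζ δ ∩ ball 0 R) := hgc.mono Set.inter_subset_right
      exact lift_unique hcov (((convex_ball ζ δ).inter (convex_ball 0 R)).isPreconnected)
        hhc hgc'
        (fun z hz => hsm (hballsub hz.1).2) (hgm.mono_left Set.inter_subset_right)
        (fun z hz => by
          have e1 : p (s (f z)) = f z := hsp _ (hballsub hz.1).2
          have e2 : p (g z) = f z := hgp hz.2
          exact e1.trans e2.symm)
        (Set.mem_inter hwball hwR)
        (by show s (f w) = g w; rw [← hpgw]; exact hse)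
  choose! h hc hm hep heg using hpatch
  -- pairwise agreement
  have hpair : ∀ ζ ∈ sphere (0:ℂ) R, ∀ ξ ∈ sphere (0:ℂ) R,
      Set.EqOn (h ζ) (h ξ) (ball ζ δ ∩ ball ξ δ) := by
    intro ζ hζ ξ hξ
    rcases eq_or_ne ζ ξ with rfl | hne
    · exact fun z _ => rfl
    rcases Set.eq_empty_or_nonempty (ball ζ δ ∩ ball ξ δ) with hemp | ⟨z₀, hz₀⟩
    · intro z hz; rw [hemp] at hz; exact absurd hz (Set.notMem_empty z)
    have hζR : ‖ζ‖ = R := by rwa [mem_sphere_zero_iff_norm] at hζ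
    have hξR : ‖ξ‖ = R := by rwa [mem_sphere_zero_iff_norm] at hξ
    -- the midpoint
    set m : ℂ := (ζ + ξ)/2 with hmdef
    have hd : ‖ζ - ξ‖ < 2 * δ := by
      have h1 := hz₀.1; have h2 := hz₀.2
      rw [mem_ball, Complex.dist_eq] at h1 h2
      have e0 : (z₀ - ξ) - (z₀ - ζ) = ζ - ξ := by ring
      calc ‖ζ - ξ‖ = ‖(z₀ - ξ) - (z₀ - ζ)‖ := by
            rw [e0]
      _ ≤ ‖z₀ - ξ‖ + ‖z₀ - ζ‖ := norm_sub_le _ _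
      _ < 2 * δ := by
          rw []
          linarith [h1, h2]
    have hmζ : m ∈ ball ζ δ := by
      rw [mem_ball, Complex.dist_eq]
      have : m - ζ = (ξ - ζ)/2 := by rw [hmdef]; ring
      rw [this, norm_div, norm_sub_rev]
      have : ‖ζ - ξ‖ / ‖(2:ℂ)‖ = ‖ζ - ξ‖ / 2 := by
        norm_num
      rw [this]
      linarith
    have hmξ : m ∈ ball ξ δ := by
      rw [mem_ball, Complex.dist_eq]
      have : m - ξ = (ζ - ξ)/2 := by rw [hmdef]; ring
      rw [this, norm_div]
      have : ‖ζ - ξ‖ / ‖(2:ℂ)‖ = ‖ζ - ξ‖ / 2 := by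
        norm_num
      rw [this]
      linarith
    have hmR : m ∈ ball (0:ℂ) R := by
      rw [mem_ball_zero_iff]
      exact midpoint_abs_lt hR0 hζR hξR hne
    have hm1 : h ζ m = g m := heg ζ hζ ⟨hmζ, hmR⟩
    have hm2 : h ξ m = g m := heg ξ hξ ⟨hmξ, hmR⟩
    apply lift_unique hcov (((convex_ball ζ δ).inter (convex_ball ξ δ)).isPreconnected)
      ((hc ζ hζ).mono Set.inter_subset_left) ((hc ξ hξ).mono Set.inter_subset_right)
      ((hm ζ hζ).mono_left Set.inter_subset_left) ((hm ξ hξ).mono_left Set.inter_subset_right)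
      (fun z hz => by
        have e1 : p (h ζ z) = f z := hep ζ hζ hz.1
        have e2 : p (h ξ z) = f z := hep ξ hξ hz.2
        exact e1.trans e2.symm)
      (Set.mem_inter hmζ hmξ)
      (by rw [hm1, hm2])
  -- the new radius
  set R' : ℝ := min (R + δ) 1 with hR'def
  have hRR' : R < R' := lt_min (by linarith) hR1
  have hR'1 : R' ≤ 1 := min_le_right _ _
  have hR'Rδ : R' ≤ R + δ := min_le_left _ _
  -- the retraction to the sphere
  set ζf : ℂ → ℂ := fun z => ((R / ‖z‖ : ℝ) : ℂ) * z with hζfdef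
  have hζfsphere : ∀ z : ℂ, R ≤ ‖z‖ → ζf z ∈ sphere (0:ℂ) R := by
    intro z hz
    have haz : 0 < ‖z‖ := lt_of_lt_of_le hR0 hz
    rw [mem_sphere_zero_iff_norm, hζfdef]
    simp only [norm_mul, Complex.norm_real, Real.norm_eq_abs]
    rw [_root_.abs_of_nonneg (by positivity : (0:ℝ) ≤ R / ‖z‖)]
    field_simp
  have hζfball : ∀ z : ℂ, R ≤ ‖z‖ → ‖z‖ < R + δ → z ∈ ball (ζf z) δ := by
    intro z hz hz2
    have haz : 0 < ‖z‖ := lt_of_lt_of_le hR0 hz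
    have : z - ζf z = ((1 - R / ‖z‖ : ℝ) : ℂ) * z := by
      rw [hζfdef]; push_cast; ring
    rw [mem_ball, Complex.dist_eq, this, norm_mul, Complex.norm_real, Real.norm_eq_abs,
      _root_.abs_of_nonneg (by
        have : R / ‖z‖ ≤ 1 := by
          rw [div_le_one haz]; exact hz
        linarith)]
    have : (1 - R / ‖z‖) * ‖z‖ = ‖z‖ - R := by
      field_simp
    rw [this]
    linarith
  -- the glued lift
  set G : ℂ → ℂ := fun z => if ‖z‖ < R then g z else h (ζf z) z with hGdef
  have hGg : ∀ z, ‖z‖ < R → G z = g z := by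
    intro z hz; rw [hGdef]; exact if_pos hz
  have hGh : ∀ z, ¬ (‖z‖ < R) → G z = h (ζf z) z := by
    intro z hz; rw [hGdef]; exact if_neg hz
  -- key: agreement with patches
  have hkey : ∀ ζ₀ ∈ sphere (0:ℂ) R, Set.EqOn G (h ζ₀) (ball 0 R' ∩ ball ζ₀ δ) := by
    intro ζ₀ hζ₀ z hz
    by_cases hzR : ‖z‖ < R
    · rw [hGg z hzR]
      exact (heg ζ₀ hζ₀ ⟨hz.2, by rwa [mem_ball_zero_iff]⟩).symm
    · rw [hGh z hzR]
      push_neg at hzR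
      have hzR' : ‖z‖ < R + δ := by
        have := hz.1
        rw [mem_ball_zero_iff] at this
        linarith [lt_of_lt_of_le this hR'Rδ]
      exact hpair (ζf z) (hζfsphere z hzR) ζ₀ hζ₀ ⟨hζfball z hzR hzR', hz.2⟩
  refine ⟨R', hRR', hR'1, G, ?_, ?_, ?_, ?_⟩
  · -- continuity
    intro z₀ hz₀
    by_cases hzR : ‖z₀‖ < R
    · have hz₀R : z₀ ∈ ball (0:ℂ) R := by rwa [mem_ball_zero_iff]
      have hc1 : ContinuousWithinAt g (ball 0 R' ∩ ball 0 R) z₀ :=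
        (hgc.mono Set.inter_subset_right) z₀ ⟨hz₀, hz₀R⟩
      have hc2 : ContinuousWithinAt G (ball 0 R' ∩ ball 0 R) z₀ := by
        apply hc1.congr
        · intro y hy
          have : ‖y‖ < R := by
            rw [← mem_ball_zero_iff]; exact hy.2
          exact hGg y this
        · exact hGg z₀ hzR
      exact (continuousWithinAt_inter (isOpen_ball.mem_nhds hz₀R)).mp hc2
    · push_neg at hzR
      have hzR' : ‖z₀‖ < R + δ := by
        rw [mem_ball_zero_iff] at hz₀
        linarith [lt_of_lt_of_le hz₀ hR'Rδ]
      have hζ₀s := hζfsphere z₀ hzR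
      have hz₀b : z₀ ∈ ball (ζf z₀) δ := hζfball z₀ hzR hzR'
      have hc1 : ContinuousWithinAt (h (ζf z₀)) (ball 0 R' ∩ ball (ζf z₀) δ) z₀ :=
        ((hc (ζf z₀) hζ₀s).mono Set.inter_subset_right) z₀ ⟨hz₀, hz₀b⟩
      have hc2 : ContinuousWithinAt G (ball 0 R' ∩ ball (ζf z₀) δ) z₀ := by
        apply hc1.congr
        · intro y hy
          exact hkey (ζf z₀) hζ₀s hy
        · exact hkey (ζf z₀) hζ₀s ⟨hz₀, hz₀b⟩
      exact (continuousWithinAt_inter (isOpen_ball.mem_nhds hz₀b)).mp hc2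
  · -- maps to
    intro z hz
    by_cases hzR : ‖z‖ < R
    · rw [hGg z hzR]
      exact hgm (by rwa [mem_ball_zero_iff])
    · rw [hGh z hzR]
      push_neg at hzR
      have hzR' : ‖z‖ < R + δ := by
        rw [mem_ball_zero_iff] at hz
        linarith [lt_of_lt_of_le hz hR'Rδ]
      exact hm (ζf z) (hζfsphere z hzR) (hζfball z hzR hzR')
  · -- p ∘ G = f
    intro z hz
    by_cases hzR : ‖z‖ < R
    · have : (p ∘ G) z = (p ∘ g) z := by
        simp only [Function.comp_apply, hGg z hzR]
      rw [this]
      exact hgp (by rwa [mem_ball_zero_iff])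
    · have : (p ∘ G) z = (p ∘ h (ζf z)) z := by
        simp only [Function.comp_apply, hGh z hzR]
      rw [this]
      push_neg at hzR
      have hzR' : ‖z‖ < R + δ := by
        rw [mem_ball_zero_iff] at hz
        linarith [lt_of_lt_of_le hz hR'Rδ]
      exact hep (ζf z) (hζfsphere z hzR) (hζfball z hzR hzR')
  · -- G 0 = 0
    rw [hGg 0 (by simpa using hR0), hg0]

lemma exists_lift (hD : IsOpen D)
    (hcov : IsCoveringMap (Set.MapsTo.restrict p unitDisc D hmaps))
    {f : ℂ → ℂ} (hfc : ContinuousOn f unitDisc) (hfm : Set.MapsTo f unitDisc D)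
    (hf0 : f 0 = p 0) :
    ∃ g, IsLiftOn p f g unitDisc := by
  classical
  -- base lift near 0
  obtain ⟨U, s, hUopen, hpeU, hUsub, hsc, hsm, hsp, hse⟩ := exists_section hD hcov zero_mem_unitDisc
  have hfc0 : ContinuousAt f 0 := hfc.continuousAt (isOpen_unitDisc.mem_nhds zero_mem_unitDisc)
  have hnhds : unitDisc ∩ f ⁻¹' U ∈ 𝓝 (0:ℂ) := by
    apply Filter.inter_mem (isOpen_unitDisc.mem_nhds zero_mem_unitDisc)
    exact hfc0.preimage_mem_nhds (hUopen.mem_nhds (by rw [hf0]; exact hpeU))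
  obtain ⟨r, hr0, hrsub⟩ := Metric.mem_nhds_iff.mp hnhds
  have hbase : ∀ t : ℝ, 0 < t → t ≤ r → IsLiftOn p f (s ∘ f) (ball 0 t) := by
    intro t ht0 htr
    have hsubt : ball (0:ℂ) t ⊆ unitDisc ∩ f ⁻¹' U := (ball_subset_ball htr).trans hrsub
    refine ⟨hsc.comp (hfc.mono (fun z hz => (hsubt hz).1)) (fun z hz => (hsubt hz).2),
      fun z hz => hsm (hsubt hz).2, fun z hz => hsp _ (hsubt hz).2, ?_⟩
    show s (f 0) = 0
    rw [hf0]; exact hse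
  -- the set of good radii
  set S : Set ℝ := {t : ℝ | 0 < t ∧ t ≤ 1 ∧ ∃ g, IsLiftOn p f g (ball 0 t)} with hSdef
  have hr₁S : min r 1 ∈ S :=
    ⟨lt_min hr0 one_pos, min_le_right _ _,
      s ∘ f, hbase _ (lt_min hr0 one_pos) (min_le_left _ _)⟩
  have hSne : S.Nonempty := ⟨_, hr₁S⟩
  have hSbdd : BddAbove S := ⟨1, fun t ht => ht.2.1⟩
  set R : ℝ := sSup S with hRdef
  have hR0 : 0 < R := lt_of_lt_of_le (lt_min hr0 one_pos) (le_csSup hSbdd hr₁S)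
  have hR1 : R ≤ 1 := csSup_le hSne (fun t ht => ht.2.1)
  -- glued lift on ball 0 R
  have hSlift : ∀ t : ℝ, t ∈ S → ∃ g, IsLiftOn p f g (ball 0 t) := fun t ht => ht.2.2
  choose! gl hgl using hSlift
  have hagree : ∀ t ∈ S, ∀ t' ∈ S, ∀ z : ℂ,
      ‖z‖ < t → ‖z‖ < t' → gl t z = gl t' z := by
    intro t ht t' ht' z hzt hzt'
    have h1 := hgl t ht
    have h2 := hgl t' ht'
    have hsub1 : ball (0:ℂ) (min t t') ⊆ ball 0 t := ball_subset_ball (min_le_left _ _)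
    have hsub2 : ball (0:ℂ) (min t t') ⊆ ball 0 t' := ball_subset_ball (min_le_right _ _)
    have h0m : (0:ℂ) ∈ ball (0:ℂ) (min t t') := by
      simp [lt_min ht.1 ht'.1]
    apply lift_unique hcov (convex_ball (0:ℂ) (min t t')).isPreconnected
      (h1.1.mono hsub1) (h2.1.mono hsub2) (h1.2.1.mono_left hsub1) (h2.2.1.mono_left hsub2)
      (fun y hy => by
        have e1 : p (gl t y) = f y := h1.2.2.1 (hsub1 hy)
        have e2 : p (gl t' y) = f y := h2.2.2.1 (hsub2 hy)
        exact e1.trans e2.symm)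
      h0m (h1.2.2.2.trans h2.2.2.2.symm)
    rw [mem_ball_zero_iff]
    exact lt_min hzt hzt'
  set G : ℂ → ℂ := fun z =>
    if hz : ∃ t, t ∈ S ∧ ‖z‖ < t then gl hz.choose z else 0 with hGdef
  have hGkey : ∀ t ∈ S, ∀ z : ℂ, ‖z‖ < t → G z = gl t z := by
    intro t ht z hzt
    have hex : ∃ t', t' ∈ S ∧ ‖z‖ < t' := ⟨t, ht, hzt⟩
    rw [hGdef]
    simp only [dif_pos hex]
    exact hagree _ hex.choose_spec.1 t ht z hex.choose_spec.2 hzt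
  have hGlift : IsLiftOn p f G (ball 0 R) := by
    refine ⟨?_, ?_, ?_, ?_⟩
    · intro z₀ hz₀
      obtain ⟨t, htS, hzt⟩ := exists_lt_of_lt_csSup hSne
        (by rwa [mem_ball_zero_iff] at hz₀)
      have hz₀t : z₀ ∈ ball (0:ℂ) t := by rwa [mem_ball_zero_iff]
      have hc1 : ContinuousWithinAt (gl t) (ball 0 R ∩ ball 0 t) z₀ :=
        ((hgl t htS).1.mono Set.inter_subset_right) z₀ ⟨hz₀, hz₀t⟩
      have hc2 : ContinuousWithinAt G (ball 0 R ∩ ball 0 t) z₀ := by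
        apply hc1.congr
        · intro y hy
          exact hGkey t htS y (by rw [← mem_ball_zero_iff]; exact hy.2)
        · exact hGkey t htS z₀ hzt
      exact (continuousWithinAt_inter (isOpen_ball.mem_nhds hz₀t)).mp hc2
    · intro z hz
      obtain ⟨t, htS, hzt⟩ := exists_lt_of_lt_csSup hSne
        (by rwa [mem_ball_zero_iff] at hz)
      rw [hGkey t htS z hzt]
      exact (hgl t htS).2.1 (by rwa [mem_ball_zero_iff])
    · intro z hz
      obtain ⟨t, htS, hzt⟩ := exists_lt_of_lt_csSup hSne
        (by rwa [mem_ball_zero_iff] at hz)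
      have : (p ∘ G) z = (p ∘ gl t) z := by
        simp only [Function.comp_apply, hGkey t htS z hzt]
      rw [this]
      exact (hgl t htS).2.2.1 (by rwa [mem_ball_zero_iff])
    · have h0 : ‖(0:ℂ)‖ < min r 1 := by simpa using lt_min hr0 one_pos
      rw [hGkey _ hr₁S 0 h0]
      exact (hgl _ hr₁S).2.2.2
  rcases lt_or_eq_of_le hR1 with hRlt | hReq
  · exfalso
    obtain ⟨R', hRR', hR'1, g', hg'⟩ := extend_lift hD hcov hfc hfm hR0 hRlt hGlift
    have hR'S : R' ∈ S := ⟨lt_trans hR0 hRR', hR'1, g', hg'⟩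
    exact absurd (le_csSup hSbdd hR'S) (not_le.mpr hRR')
  · refine ⟨G, ?_⟩
    have : unitDisc = ball (0:ℂ) R := by rw [hReq]; rfl
    rwa [this]
/-- A holomorphic function injective on an open set has nonvanishing derivative. -/
theorem deriv_ne_zero_of_injOn {U : Set ℂ} (hU : IsOpen U) {q : ℂ → ℂ}
    (hq : DifferentiableOn ℂ q U) (hinj : Set.InjOn q U) {z : ℂ} (hz : z ∈ U) :
    deriv q z ≠ 0 := by
  intro h0
  have hqa : AnalyticAt ℂ q z := hq.analyticAt (hU.mem_nhds hz)
  set F : ℂ → ℂ := fun w => q w - q z with hF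
  have hFa : AnalyticAt ℂ F z := hqa.sub analyticAt_const
  -- F is not eventually zero
  have hne : ¬ ∀ᶠ w in 𝓝 z, F w = 0 := by
    intro h
    obtain ⟨ε, hε, hball⟩ := Metric.eventually_nhds_iff_ball.mp
      (h.and (hU.eventually_mem hz))
    obtain ⟨ε', hε'2, hε'⟩ : ∃ ε', 0 < ε' ∧ ε' < ε := ⟨ε/2, by positivity, by linarith⟩
    have hw : z + ε' ∈ ball z ε := by
      simp [Complex.dist_eq, abs_of_pos hε'2, hε']
    obtain ⟨h1, h2⟩ := hball _ hw
    have : q (z + ε') = q z := by simpa [hF, sub_eq_zero] using h1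
    have := hinj h2 hz this
    simp at this
    exact absurd this (by positivity)
  have horder : analyticOrderAt F z ≠ ⊤ := fun h => hne (analyticOrderAt_eq_top.mp h)
  obtain ⟨n, hn⟩ := WithTop.ne_top_iff_exists.mp horder
  obtain ⟨g, hg, hgz, hev⟩ := (hFa.analyticOrderAt_eq_natCast (n := n)).mp hn.symm
  -- n ≠ 0
  have hn0 : n ≠ 0 := by
    rintro rfl
    have := hev.self_of_nhds
    simp [hF] at this
    exact hgz this.symm
  -- n ≠ 1
  have hn1 : n ≠ 1 := by
    rintro rfl
    have hd1 : HasDerivAt (fun w => (w - z) • g w) (g z) z := by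
      have := ((hasDerivAt_id z).sub_const z).smul hg.differentiableAt.hasDerivAt
      simp at this; exact this
    have hd2 : deriv F z = g z := by
      rw [Filter.EventuallyEq.deriv_eq (by simp at hev; exact hev)]
      exact hd1.deriv
    have hd3 : deriv F z = deriv q z := by
      simp [hF, deriv_sub_const]
    rw [hd3, h0] at hd2
    exact hgz hd2.symm
  have hn2 : 2 ≤ n := by omega
  -- n-th root of g near z
  obtain ⟨c, hc⟩ := IsAlgClosed.exists_pow_nat_eq (g z) (by omega : 0 < n)
  have hcne : c ≠ 0 := by
    rintro rfl; rw [zero_pow hn0] at hc; exact hgz hc.symm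
  set h : ℂ → ℂ := fun w => c * Complex.exp (Complex.log (g w / g z) / n) with hdefh
  have hh : AnalyticAt ℂ h z := by
    apply analyticAt_const.mul
    apply AnalyticAt.cexp
    apply AnalyticAt.div _ analyticAt_const (by norm_cast)
    exact (hg.div analyticAt_const hgz).clog (by simp [div_self hgz])
  have hhz : h z = c := by
    simp [hdefh, div_self hgz]
  have hroot : ∀ᶠ w in 𝓝 z, h w ^ n = g w := by
    filter_upwards [hg.continuousAt.eventually_ne hgz] with w hw
    have hne' : g w / g z ≠ 0 := div_ne_zero hw hgz
    have : Complex.exp (Complex.log (g w / g z) / n) ^ n = g w / g z := by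
      rw [← Complex.exp_nat_mul]
      rw [mul_div_cancel₀ _ (by norm_cast : (n : ℂ) ≠ 0)]
      exact Complex.exp_log hne'
    rw [hdefh]
    rw [mul_pow, this, hc]
    field_simp
  set φ : ℂ → ℂ := fun w => (w - z) * h w with hdefφ
  have hφz : φ z = 0 := by simp [hdefφ]
  have hφa : AnalyticAt ℂ φ z := ((analyticAt_id ..).sub analyticAt_const).mul hh
  have hφd : HasDerivAt φ c z := by
    have := ((hasDerivAt_id z).sub_const z).mul hh.differentiableAt.hasDerivAt
    simp [hhz] at this; exact this
  obtain ⟨ps, hps⟩ := hφa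
  have hstrict : HasStrictDerivAt φ (ps 1 fun _ => 1) z := hps.hasStrictDerivAt
  have : (ps 1 fun _ => 1) = c := hstrict.hasDerivAt.unique hφd
  rw [this] at hstrict
  -- local inverse
  have hE := hstrict.hasStrictFDerivAt_equiv hcne
  set ψ := hE.localInverse φ _ z with hdefψ
  -- the key eventual identity : F = φ ^ n
  have hFφ : ∀ᶠ w in 𝓝 z, F w = φ w ^ n := by
    filter_upwards [hev, hroot] with w h1 h2
    rw [hdefφ, mul_pow, h2]
    simpa using h1
  obtain ⟨ε, hε, hball⟩ := Metric.eventually_nhds_iff_ball.mp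
    (hFφ.and (hU.eventually_mem hz))
  -- eventual properties of ψ near 0 = φ z
  have hψcont : Filter.Tendsto ψ (𝓝 0) (𝓝 z) := by
    have := hE.localInverse_tendsto
    rwa [hφz] at this
  have hri : ∀ᶠ y in 𝓝 (0:ℂ), φ (ψ y) = y := by
    have := hE.eventually_right_inverse
    rwa [hφz] at this
  have hmem : ∀ᶠ y in 𝓝 (0:ℂ), ψ y ∈ ball z ε :=
    hψcont (Metric.ball_mem_nhds z hε)
  obtain ⟨δ, hδ, hδball⟩ := Metric.eventually_nhds_iff_ball.mp (hri.and hmem)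
  -- pick t and ζ t
  set ζ : ℂ := Complex.exp ((2 * Real.pi / n : ℝ) * Complex.I) with hdefζ
  have hζn : ζ ^ n = 1 := by
    rw [hdefζ, ← Complex.exp_nat_mul]
    have hnne : (n : ℂ) ≠ 0 := by norm_cast
    have : (n : ℂ) * ((2 * Real.pi / n : ℝ) * Complex.I) = 2 * Real.pi * Complex.I := by
      push_cast
      field_simp
    rw [this]
    simpa using Complex.exp_two_pi_mul_I
  have hζ1 : ζ ≠ 1 := by
    rw [hdefζ]
    intro h
    obtain ⟨k, hk⟩ := Complex.exp_eq_one_iff.mp h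
    have him := congrArg Complex.im hk
    simp [Complex.mul_I_im] at him
    have hpi : (0:ℝ) < Real.pi := Real.pi_pos
    have hn' : (0:ℝ) < n := by positivity
    have h1n : 2 * Real.pi / n = k * (2 * Real.pi) := by
      simpa using him
    rcases le_or_gt (k:ℝ) 0 with hk0 | hk0
    · have : (0:ℝ) < 2 * Real.pi / n := by positivity
      nlinarith
    · have hk1 : (1:ℝ) ≤ k := by exact_mod_cast hk0
      have hn2' : (2:ℝ) ≤ n := by exact_mod_cast hn2
      have key := h1n
      rw [div_eq_iff (ne_of_gt hn')] at key
      have hkn : (2:ℝ) ≤ (k:ℝ) * (n:ℝ) := by nlinarith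
      nlinarith [key, hpi, hkn]
  have hζabs : ‖ζ‖ = 1 := by
    rw [hdefζ, Complex.norm_exp]
    simp
  set t : ℂ := ((δ/2 : ℝ) : ℂ) with hdeft
  have htabs : ‖t‖ = δ / 2 := by
    rw [hdeft, Complex.norm_real, Real.norm_eq_abs, abs_of_pos (by linarith)]
  have ht0 : t ≠ 0 := by
    intro h
    rw [h] at htabs
    simp at htabs
    linarith
  have htδ : t ∈ ball (0:ℂ) δ := by
    rw [mem_ball, Complex.dist_eq, sub_zero, htabs]; linarith
  have hζtδ : ζ * t ∈ ball (0:ℂ) δ := by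
    rw [mem_ball, Complex.dist_eq, sub_zero, norm_mul, hζabs, one_mul, htabs]; linarith
  obtain ⟨hφψt, hψtball⟩ := hδball t htδ
  obtain ⟨hφψζt, hψζtball⟩ := hδball (ζ * t) hζtδ
  -- the two points
  have hne12 : ψ t ≠ ψ (ζ * t) := by
    intro h
    rw [h, hφψζt] at hφψt
    have hzt : (ζ - 1) * t = 0 := by linear_combination hφψt
    rcases mul_eq_zero.mp hzt with h' | h'
    · exact hζ1 (sub_eq_zero.mp h')
    · exact ht0 h'
  have hq12 : q (ψ t) = q (ψ (ζ * t)) := by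
    have h1 := (hball _ hψtball).1
    have h2 := (hball _ hψζtball).1
    have : F (ψ t) = F (ψ (ζ * t)) := by
      rw [h1, h2, hφψt, hφψζt, mul_pow, hζn, one_mul]
    simpa [hF, sub_left_inj] using this
  exact hne12 (hinj (hball _ hψtball).2 (hball _ hψζtball).2 hq12)

lemma deriv_p_ne_zero (hD : IsOpen D)
    (hcov : IsCoveringMap (Set.MapsTo.restrict p unitDisc D hmaps))
    (hpd : DifferentiableOn ℂ p unitDisc) {z : ℂ} (hz : z ∈ unitDisc) :
    deriv p z ≠ 0 := by
  obtain ⟨V, hVopen, hzV, hVsub, hVinj⟩ := exists_injOn hcov hz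
  exact deriv_ne_zero_of_injOn hVopen (hpd.mono hVsub) hVinj hzV

lemma lift_differentiableOn (hD : IsOpen D)
    (hcov : IsCoveringMap (Set.MapsTo.restrict p unitDisc D hmaps))
    (hpd : DifferentiableOn ℂ p unitDisc)
    {f g : ℂ → ℂ} (hfd : DifferentiableOn ℂ f unitDisc)
    (hg : IsLiftOn p f g unitDisc) : DifferentiableOn ℂ g unitDisc := by
  obtain ⟨hgc, hgm, hgp, hg0⟩ := hg
  intro z hz
  suffices h : DifferentiableAt ℂ g z from h.differentiableWithinAt
  have hgz : g z ∈ unitDisc := hgm hz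
  obtain ⟨U, s, hUopen, hpeU, hUsub, hsc, hsm, hsp, hse⟩ := exists_section hD hcov hgz
  -- s is differentiable on U
  have hsd : ∀ u ∈ U, DifferentiableAt ℂ s u := by
    intro u hu
    have hsu : s u ∈ unitDisc := hsm hu
    have hpda : HasDerivAt p (deriv p (s u)) (s u) :=
      ((hpd.differentiableAt (isOpen_unitDisc.mem_nhds hsu)).hasDerivAt)
    have hinv : HasDerivAt s (deriv p (s u))⁻¹ u := by
      apply HasDerivAt.of_local_left_inverse (hsc.continuousAt (hUopen.mem_nhds hu)) hpda
        (deriv_p_ne_zero hD hcov hpd hsu)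
      filter_upwards [hUopen.mem_nhds hu] with y hy
      exact hsp y hy
    exact hinv.differentiableAt
  -- locally g = s ∘ f
  have hpgz : p (g z) = f z := hgp hz
  have hnhds : unitDisc ∩ f ⁻¹' U ∈ 𝓝 z := by
    apply Filter.inter_mem (isOpen_unitDisc.mem_nhds hz)
    apply (hfd.continuousOn.continuousAt (isOpen_unitDisc.mem_nhds hz)).preimage_mem_nhds
    exact hUopen.mem_nhds (by rw [← hpgz]; exact hpeU)
  obtain ⟨ρ, hρ0, hρsub⟩ := Metric.mem_nhds_iff.mp hnhds
  have hzρ : z ∈ ball z ρ := mem_ball_self hρ0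
  have heq : Set.EqOn g (s ∘ f) (ball z ρ) := by
    apply lift_unique hcov (convex_ball z ρ).isPreconnected
      (hgc.mono (fun y hy => (hρsub hy).1))
      ((hsc.comp ((hfd.continuousOn).mono (fun y hy => (hρsub hy).1))
        (fun y hy => (hρsub hy).2)))
      (hgm.mono_left (fun y hy => (hρsub hy).1))
      (fun y hy => hsm (hρsub hy).2)
      (fun y hy => by
        have e1 : p (g y) = f y := hgp (hρsub hy).1
        have e2 : p (s (f y)) = f y := hsp _ (hρsub hy).2
        exact e1.trans e2.symm)
      hzρ
      (by show g z = s (f z); rw [← hpgz]; exact hse.symm)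
  have hsf : DifferentiableAt ℂ (s ∘ f) z := by
    apply DifferentiableAt.comp
    · exact hsd (f z) (hρsub hzρ).2
    · exact hfd.differentiableAt (isOpen_unitDisc.mem_nhds hz)
  apply hsf.congr_of_eventuallyEq
  filter_upwards [isOpen_ball.mem_nhds hzρ] with y hy
  exact heq hy


/-- If `p : E → D` is a holomorphic covering of a domain `D ⊆ ℂ` by the unit disc,
then every holomorphic `f : E → D` with `f(0) = p(0)` satisfies `|f'(0)| ≤ |p'(0)|`;
consequently `κ_D(p(0); p'(0)) = 1`. -/
theorem stmt8 (D : Set ℂ) (hD : IsOpen D ∧ IsConnected D) (p : ℂ → ℂ)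
    (hp : IsHoloCoveringOnto p D) :
    (∀ f : ℂ → ℂ, DifferentiableOn ℂ f unitDisc → MapsTo f unitDisc D →
      f 0 = p 0 → ‖deriv f 0‖ ≤ ‖deriv p 0‖) ∧
    kobayashi D (p 0) (deriv p 0) = 1 := by
  obtain ⟨hpd, hmaps, hcov, hsurj⟩ := hp
  have hD1 := hD.1
  have part1 : ∀ f : ℂ → ℂ, DifferentiableOn ℂ f unitDisc → MapsTo f unitDisc D →
      f 0 = p 0 → ‖deriv f 0‖ ≤ ‖deriv p 0‖ := by
    intro f hfd hfm hf0
    obtain ⟨g, hg⟩ := exists_lift hD1 hcov hfd.continuousOn hfm hf0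
    have hgd := lift_differentiableOn hD1 hcov hpd hfd hg
    obtain ⟨hgc, hgm, hgp, hg0⟩ := hg
    have hschwarz : ‖deriv g 0‖ ≤ 1 := by
      have h1 : DifferentiableOn ℂ g (ball (0:ℂ) 1) := hgd
      have h2 : Set.MapsTo g (ball (0:ℂ) 1) (ball (0:ℂ) 1) := hgm
      exact Complex.norm_deriv_le_one_of_mapsTo_ball h1
        (by rw [hg0]; exact h2.mono_right ball_subset_closedBall) one_pos
    have hfpg : deriv f 0 = deriv p (g 0) * deriv g 0 := by
      have hev : f =ᶠ[nhds 0] (p ∘ g) := by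
        filter_upwards [isOpen_unitDisc.mem_nhds zero_mem_unitDisc] with y hy
        exact (hgp hy).symm
      rw [hev.deriv_eq]
      exact deriv_comp 0
        (hpd.differentiableAt (isOpen_unitDisc.mem_nhds (hgm zero_mem_unitDisc)))
        (hgd.differentiableAt (isOpen_unitDisc.mem_nhds zero_mem_unitDisc))
    rw [hfpg, norm_mul, hg0]
    calc ‖deriv p 0‖ * ‖deriv g 0‖
        ≤ ‖deriv p 0‖ * 1 :=
          mul_le_mul_of_nonneg_left hschwarz (norm_nonneg _)
      _ = ‖deriv p 0‖ := mul_one _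
  refine ⟨part1, ?_⟩
  have hp0 : deriv p 0 ≠ 0 := deriv_p_ne_zero hD1 hcov hpd zero_mem_unitDisc
  show sInf {r : ℝ | ∃ (α : ℂ) (f : ℂ → ℂ), ‖α‖ = r ∧
    DifferentiableOn ℂ f unitDisc ∧ MapsTo f unitDisc D ∧
    f 0 = p 0 ∧ α • deriv f 0 = deriv p 0} = 1
  set K : Set ℝ := {r : ℝ | ∃ (α : ℂ) (f : ℂ → ℂ), ‖α‖ = r ∧
    DifferentiableOn ℂ f unitDisc ∧ MapsTo f unitDisc D ∧
    f 0 = p 0 ∧ α • deriv f 0 = deriv p 0} with hK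
  have h1K : (1:ℝ) ∈ K := ⟨1, p, by simp, hpd, hmaps, rfl, by simp⟩
  have hbdd : BddBelow K := by
    refine ⟨0, ?_⟩
    rintro r ⟨α, f, hα, -⟩
    rw [← hα]
    exact norm_nonneg _
  have hge : ∀ r ∈ K, (1:ℝ) ≤ r := by
    rintro r ⟨α, f, hα, hfd, hfm, hf0, hder⟩
    have hle := part1 f hfd hfm hf0
    have hne : deriv f 0 ≠ 0 := by
      intro h
      rw [h, smul_zero] at hder
      exact hp0 hder.symm
    have hmul : ‖α‖ * ‖deriv f 0‖ = ‖deriv p 0‖ := by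
      rw [← norm_mul, ← smul_eq_mul, hder]
    have habs : 0 < ‖deriv f 0‖ := norm_pos_iff.mpr hne
    rw [← hα]
    nlinarith [hle, habs, hmul]
  exact le_antisymm (csInf_le hbdd h1K) (le_csInf ⟨1, h1K⟩ hge)
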